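/- Let a ∈ ℝ, λ > 1, and let f : ℝ → ℝ be continuously differentiable with f'(x) ≥ 0 for all x. Then there exists a global classical solution φ : ℝ × [0,∞) → ℝ of the damped Burgers equation with initial data f; it is determined by the implicit relation φ(x + f(x)·B(t), t) = f(x)/A(t), where for each t ≥ 0 the map x ↦ x + f(x)·B(t) is a strictly increasing C¹ bijection of ℝ onto ℝ. (When the initial slope is everywhere nonnegative, the weak damping case λ > 1 still admits a global smooth solution.) -/

import Mathlib

/-- `A(t) = exp((a/(λ−1))·(1 − (1+t)^(1−λ)))`, i.e. `A(t) = exp(∫₀ᵗ a/(1+s)^λ ds)`. -/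
noncomputable def dampA (a lam t : ℝ) : ℝ :=
  Real.exp (a / (lam - 1) * (1 - (1 + t) ^ (1 - lam)))

/-- `B(t) = ∫₀ᵗ A(s)⁻¹ ds = ∫₀ᵗ exp((a/(λ−1))·((1+s)^(1−λ) − 1)) ds`. -/
noncomputable def dampB (a lam t : ℝ) : ℝ :=
  ∫ s in (0:ℝ)..t, Real.exp (a / (lam - 1) * ((1 + s) ^ (1 - lam) - 1))

/-- `φ : ℝ × I → ℝ` (written in curried form `φ x t`) is a classical (C¹) solution of the
damped Burgers equation `∂_t φ + φ ∂_x φ = −a·φ/(1+t)^λ` on the time interval `I`,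
with initial data `f`; `φx` and `φt` are its (continuous) partial derivatives. -/
def IsDampedBurgersSol (a lam : ℝ) (f : ℝ → ℝ) (I : Set ℝ) (φ φx φt : ℝ → ℝ → ℝ) : Prop :=
  (∀ x : ℝ, φ x 0 = f x) ∧
  (∀ x : ℝ, ∀ t ∈ I, HasDerivAt (fun y => φ y t) (φx x t) x) ∧
  (∀ x : ℝ, ∀ t ∈ I, HasDerivWithinAt (fun s => φ x s) (φt x t) I t) ∧
  ContinuousOn (fun p : ℝ × ℝ => φ p.1 p.2) (Set.univ ×ˢ I) ∧
  ContinuousOn (fun p : ℝ × ℝ => φx p.1 p.2) (Set.univ ×ˢ I) ∧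
  ContinuousOn (fun p : ℝ × ℝ => φt p.1 p.2) (Set.univ ×ˢ I) ∧
  (∀ x : ℝ, ∀ t ∈ I, φt x t + φ x t * φx x t = -a * φ x t / (1 + t) ^ lam)


open Topology Filter


/-- integrand of `dampB`, equal to `A(t)⁻¹`. -/
noncomputable def dampI (a lam t : ℝ) : ℝ :=
  Real.exp (a / (lam - 1) * ((1 + t) ^ (1 - lam) - 1))

lemma dampA_pos (a lam t : ℝ) : 0 < dampA a lam t := Real.exp_pos _

lemma dampI_pos (a lam t : ℝ) : 0 < dampI a lam t := Real.exp_pos _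

lemma dampA_zero (a lam : ℝ) : dampA a lam 0 = 1 := by
  simp [dampA]

lemma dampB_zero (a lam : ℝ) : dampB a lam 0 = 0 := by
  simp [dampB]

lemma dampA_mul_dampI (a lam t : ℝ) : dampA a lam t * dampI a lam t = 1 := by
  rw [dampA, dampI, ← Real.exp_add]
  ring_nf
  exact Real.exp_zero

lemma continuousAt_dampI (a lam : ℝ) {t : ℝ} (ht : -1 < t) :
    ContinuousAt (dampI a lam) t := by
  have h1 : (1 : ℝ) + t ≠ 0 := by linarith
  have : ContinuousAt (fun s : ℝ => (1 + s) ^ (1 - lam)) t :=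
    (Real.continuousAt_rpow_const _ _ (Or.inl h1)).comp
      (by fun_prop : ContinuousAt (fun s : ℝ => 1 + s) t)
  exact Real.continuous_exp.continuousAt.comp (continuousAt_const.mul (this.sub continuousAt_const))

lemma dampB_nonneg (a lam : ℝ) {t : ℝ} (ht : 0 ≤ t) : 0 ≤ dampB a lam t :=
  intervalIntegral.integral_nonneg ht (fun u _ => (Real.exp_pos _).le)

lemma dampI_intervalIntegrable (a lam : ℝ) {t : ℝ} (ht : -1 < t) :
    IntervalIntegrable (dampI a lam) MeasureTheory.volume 0 t := by
  apply ContinuousOn.intervalIntegrable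
  intro s hs
  have : -1 < s := by
    rcases le_total 0 t with h | h
    · rw [Set.uIcc_of_le h] at hs; linarith [hs.1]
    · rw [Set.uIcc_of_ge h] at hs; linarith [hs.1]
  exact (continuousAt_dampI a lam this).continuousWithinAt

lemma hasStrictDerivAt_dampB (a lam : ℝ) {t : ℝ} (ht : -1 < t) :
    HasStrictDerivAt (dampB a lam) (dampI a lam t) t := by
  have := intervalIntegral.integral_hasStrictDerivAt_right
    (dampI_intervalIntegrable a lam ht)
    (ContinuousAt.stronglyMeasurableAtFilter isOpen_Ioi
      (fun x hx => continuousAt_dampI a lam hx) t ht)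
    (continuousAt_dampI a lam ht)
  exact this

lemma hasStrictDerivAt_dampA (a lam : ℝ) (hlam : 1 < lam) {t : ℝ} (ht : -1 < t) :
    HasStrictDerivAt (dampA a lam) (dampA a lam t * (a / (1 + t) ^ lam)) t := by
  have h1 : (0:ℝ) < 1 + t := by linarith
  have hin : HasStrictDerivAt (fun s : ℝ => (1 + s) ^ (1 - lam))
      ((1 - lam) * (1 + t) ^ (1 - lam - 1)) t := by
    have := (Real.hasStrictDerivAt_rpow_const (x := 1 + t) (p := 1 - lam)
      (Or.inl h1.ne'))
    have hc : HasStrictDerivAt (fun s : ℝ => 1 + s) 1 t :=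
      (hasStrictDerivAt_id t).const_add 1
    simpa [Function.comp_def] using this.comp t hc
  have hin2 : HasStrictDerivAt (fun s : ℝ => a / (lam - 1) * (1 - (1 + s) ^ (1 - lam)))
      (a / (lam - 1) * (-((1 - lam) * (1 + t) ^ (1 - lam - 1)))) t :=
    ((hin.const_sub 1)).const_mul _
  have := hin2.exp
  convert this using 1
  · rfl
  rw [dampA]
  have hne : lam - 1 ≠ 0 := by linarith
  have : (1 + t) ^ (1 - lam - 1) = ((1 + t) ^ lam)⁻¹ := by
    rw [← Real.rpow_neg h1.le]
    ring_nf
  rw [this]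
  field_simp
  ring

section G
variable {f : ℝ → ℝ}

lemma hasDerivAt_g (hf : ContDiff ℝ 1 f) {b : ℝ} (x : ℝ) :
    HasDerivAt (fun y => y + f y * b) (1 + deriv f x * b) x :=
  (hasDerivAt_id x).add (((hf.differentiable one_ne_zero) x).hasDerivAt.mul_const b)

lemma g_denom_pos (hf' : ∀ x : ℝ, 0 ≤ deriv f x) {b : ℝ} (hb : 0 ≤ b) (x : ℝ) : 0 < 1 + deriv f x * b := by
  have := mul_nonneg (hf' x) hb; linarith

lemma g_strictMono (hf : ContDiff ℝ 1 f) (hf' : ∀ x : ℝ, 0 ≤ deriv f x) {b : ℝ} (hb : 0 ≤ b) : StrictMono (fun y => y + f y * b) := by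
  apply strictMono_of_deriv_pos
  intro x
  rw [(hasDerivAt_g hf x).deriv]
  exact g_denom_pos hf' hb x

lemma g_surjective (hf : ContDiff ℝ 1 f) (hf' : ∀ x : ℝ, 0 ≤ deriv f x) {b : ℝ} (hb : 0 ≤ b) : Function.Surjective (fun y => y + f y * b) := by
  have hmono : Monotone (fun y => f y * b) := by
    apply monotone_of_deriv_nonneg
    · exact (hf.differentiable one_ne_zero).mul_const b
    · intro x
      rw [(((hf.differentiable one_ne_zero) x).hasDerivAt.mul_const b).deriv]
      exact mul_nonneg (hf' x) hb
  have hcont : Continuous (fun y => y + f y * b) := by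
    have := hf.continuous
    fun_prop
  apply hcont.surjective
  · apply Filter.tendsto_atTop_mono' _ _
      (Filter.tendsto_atTop_add_const_right _ (f 0 * b) Filter.tendsto_id)
    filter_upwards [Filter.eventually_ge_atTop (0:ℝ)] with y hy
    have := hmono hy
    simpa using this
  · apply Filter.tendsto_atBot_mono' _ _
      (Filter.tendsto_atBot_add_const_right _ (f 0 * b) Filter.tendsto_id)
    filter_upwards [Filter.eventually_le_atBot (0:ℝ)] with y hy
    have := hmono hy
    simpa using this

end G

noncomputable def burgH (a lam : ℝ) (f : ℝ → ℝ) (y t : ℝ) : ℝ :=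
  Function.invFun (fun x => x + f x * dampB a lam t) y

section Key
variable {a lam : ℝ} {f : ℝ → ℝ}

lemma g_burgH (hf : ContDiff ℝ 1 f) (hf' : ∀ x : ℝ, 0 ≤ deriv f x) {t : ℝ} (ht : 0 ≤ t)
    (y : ℝ) : burgH a lam f y t + f (burgH a lam f y t) * dampB a lam t = y :=
  Function.rightInverse_invFun (g_surjective hf hf' (dampB_nonneg a lam ht)) y

lemma burgH_g (hf : ContDiff ℝ 1 f) (hf' : ∀ x : ℝ, 0 ≤ deriv f x) {t : ℝ} (ht : 0 ≤ t)
    (x : ℝ) : burgH a lam f (x + f x * dampB a lam t) t = x :=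
  Function.leftInverse_invFun (g_strictMono hf hf' (dampB_nonneg a lam ht)).injective x

lemma key (hlam : 1 < lam) (hf : ContDiff ℝ 1 f) (hf' : ∀ x : ℝ, 0 ≤ deriv f x)
    (y₀ t₀ : ℝ) (ht₀ : 0 ≤ t₀) :
    ContinuousWithinAt (fun p : ℝ × ℝ => burgH a lam f p.1 p.2)
      (Set.univ ×ˢ Set.Ici 0) (y₀, t₀) ∧
    HasDerivAt (fun y => burgH a lam f y t₀)
      (1 + deriv f (burgH a lam f y₀ t₀) * dampB a lam t₀)⁻¹ y₀ ∧
    HasDerivWithinAt (fun s => burgH a lam f y₀ s)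
      (-(f (burgH a lam f y₀ t₀) * dampI a lam t₀) /
        (1 + deriv f (burgH a lam f y₀ t₀) * dampB a lam t₀)) (Set.Ici 0) t₀ := by
  have ht' : (-1:ℝ) < t₀ := by linarith
  set x₀ := burgH a lam f y₀ t₀ with hx₀
  have hb0 : 0 ≤ dampB a lam t₀ := dampB_nonneg a lam ht₀
  set P := 1 + deriv f x₀ * dampB a lam t₀ with hP
  have hPpos : 0 < P := g_denom_pos hf' hb0 x₀
  set Q := f x₀ * dampI a lam t₀ with hQ
  set G : ℝ × ℝ → ℝ × ℝ := fun q => (q.1 + f q.1 * dampB a lam q.2, q.2) with hGdef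
  -- strict derivative of G
  have hfx : HasStrictFDerivAt (fun q : ℝ × ℝ => f q.1)
      ((deriv f x₀) • ContinuousLinearMap.fst ℝ ℝ ℝ) (x₀, t₀) :=
    HasStrictDerivAt.comp_hasStrictFDerivAt (f := Prod.fst) (x₀, t₀)
      (hf.contDiffAt.hasStrictDerivAt one_ne_zero) hasStrictFDerivAt_fst
  have hBt : HasStrictFDerivAt (fun q : ℝ × ℝ => dampB a lam q.2)
      ((dampI a lam t₀) • ContinuousLinearMap.snd ℝ ℝ ℝ) (x₀, t₀) :=
    HasStrictDerivAt.comp_hasStrictFDerivAt (f := Prod.snd) (x₀, t₀)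
      (hasStrictDerivAt_dampB a lam ht') hasStrictFDerivAt_snd
  have hF1 : HasStrictFDerivAt (fun q : ℝ × ℝ => q.1 + f q.1 * dampB a lam q.2)
      (ContinuousLinearMap.fst ℝ ℝ ℝ +
        (f x₀ • ((dampI a lam t₀) • ContinuousLinearMap.snd ℝ ℝ ℝ) +
          dampB a lam t₀ • ((deriv f x₀) • ContinuousLinearMap.fst ℝ ℝ ℝ))) (x₀, t₀) :=
    hasStrictFDerivAt_fst.add (hfx.mul hBt)
  -- the derivative as a continuous linear equiv
  set Lf : ℝ × ℝ →L[ℝ] ℝ :=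
    P • ContinuousLinearMap.fst ℝ ℝ ℝ + Q • ContinuousLinearMap.snd ℝ ℝ ℝ with hLf
  set Lg : ℝ × ℝ →L[ℝ] ℝ :=
    P⁻¹ • (ContinuousLinearMap.fst ℝ ℝ ℝ - Q • ContinuousLinearMap.snd ℝ ℝ ℝ) with hLg
  have hPne : P ≠ 0 := ne_of_gt hPpos
  set E : (ℝ × ℝ) ≃L[ℝ] (ℝ × ℝ) := ContinuousLinearEquiv.equivOfInverse
    (Lf.prod (ContinuousLinearMap.snd ℝ ℝ ℝ)) (Lg.prod (ContinuousLinearMap.snd ℝ ℝ ℝ))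
    (by
      intro v
      ext <;> simp [hLf, hLg, ContinuousLinearMap.prod_apply] <;> field_simp <;> ring)
    (by
      intro v
      ext <;> simp [hLf, hLg, ContinuousLinearMap.prod_apply] <;> field_simp <;> ring)
    with hE
  have hcoe : (E : (ℝ × ℝ) →L[ℝ] (ℝ × ℝ)) =
      (ContinuousLinearMap.fst ℝ ℝ ℝ +
        (f x₀ • ((dampI a lam t₀) • ContinuousLinearMap.snd ℝ ℝ ℝ) +
          dampB a lam t₀ • ((deriv f x₀) • ContinuousLinearMap.fst ℝ ℝ ℝ))).prod
        (ContinuousLinearMap.snd ℝ ℝ ℝ) := by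
    apply ContinuousLinearMap.ext
    intro v
    have : (E : (ℝ × ℝ) →L[ℝ] (ℝ × ℝ)) v =
        (Lf.prod (ContinuousLinearMap.snd ℝ ℝ ℝ)) v := rfl
    rw [this]
    simp [hLf, hP, hQ, ContinuousLinearMap.prod_apply]
    ring
  have hG : HasStrictFDerivAt G (E : (ℝ × ℝ) →L[ℝ] (ℝ × ℝ)) (x₀, t₀) := by
    rw [hcoe]
    exact hF1.prodMk hasStrictFDerivAt_snd
  have hGx : G (x₀, t₀) = (y₀, t₀) := by
    simp only [hGdef]
    exact Prod.ext (g_burgH hf hf' ht₀ y₀) rfl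
  set Φ := hG.localInverse G _ _ with hΦ
  have hΦat : Φ (y₀, t₀) = (x₀, t₀) := by
    rw [← hGx]; exact hG.localInverse_apply_image
  have hΦd : HasStrictFDerivAt Φ (E.symm : (ℝ × ℝ) →L[ℝ] (ℝ × ℝ)) (y₀, t₀) := by
    rw [← hGx]; exact hG.to_localInverse
  have hev : ∀ᶠ q in 𝓝 (y₀, t₀), G (Φ q) = q := by
    rw [← hGx]; exact hG.eventually_right_inverse
  have heq : ∀ᶠ q in 𝓝 (y₀, t₀), 0 ≤ q.2 → (Φ q).1 = burgH a lam f q.1 q.2 := by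
    filter_upwards [hev] with q hq hq2
    have h2 : (Φ q).2 = q.2 := by simpa [hGdef] using congrArg (fun r : ℝ × ℝ => r.2) hq
    have h1 : (Φ q).1 + f ((Φ q).1) * dampB a lam q.2 = q.1 := by
      have h1' := congrArg (fun r : ℝ × ℝ => r.1) hq
      simp only [hGdef] at h1'
      rw [h2] at h1'
      exact h1'
    apply (g_strictMono hf hf' (dampB_nonneg a lam hq2)).injective
    show (Φ q).1 + f ((Φ q).1) * dampB a lam q.2 = _
    rw [h1]
    exact (g_burgH hf hf' hq2 q.1).symm
  -- the first component of Φ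
  have hΨd : HasFDerivAt (fun q => (Φ q).1)
      ((ContinuousLinearMap.fst ℝ ℝ ℝ).comp (E.symm : (ℝ × ℝ) →L[ℝ] (ℝ × ℝ))) (y₀, t₀) :=
    (ContinuousLinearMap.fst ℝ ℝ ℝ).hasFDerivAt.comp _ hΦd.hasFDerivAt
  have hEsymm : ∀ v : ℝ × ℝ, (E.symm : (ℝ × ℝ) →L[ℝ] (ℝ × ℝ)) v
      = (P⁻¹ * (v.1 - Q * v.2), v.2) := by
    intro v
    have : (E.symm : (ℝ × ℝ) →L[ℝ] (ℝ × ℝ)) v =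
        (Lg.prod (ContinuousLinearMap.snd ℝ ℝ ℝ)) v := by
      rw [hE, ContinuousLinearEquiv.symm_equivOfInverse]; rfl
    rw [this]
    simp [hLg, ContinuousLinearMap.prod_apply]
  refine ⟨?_, ?_, ?_⟩
  · -- continuity
    have hx0 : (fun p : ℝ × ℝ => burgH a lam f p.1 p.2) (y₀, t₀) = (fun q => (Φ q).1) (y₀, t₀) := by
      simp [hΦat, hx₀]
    apply ContinuousWithinAt.congr_of_eventuallyEq
      (hΨd.continuousAt.continuousWithinAt) _ hx0
    filter_upwards [nhdsWithin_le_nhds heq, self_mem_nhdsWithin] with q hq hq'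
    exact (hq (Set.mem_prod.mp hq').2).symm
  · -- derivative in y
    have hline : HasDerivAt (fun y : ℝ => (y, t₀)) ((1:ℝ), (0:ℝ)) y₀ :=
      (hasDerivAt_id y₀).prodMk (hasDerivAt_const y₀ t₀)
    have hd := hΨd.comp_hasDerivAt y₀ hline
    have hval : ((ContinuousLinearMap.fst ℝ ℝ ℝ).comp
        (E.symm : (ℝ × ℝ) →L[ℝ] (ℝ × ℝ))) ((1:ℝ), (0:ℝ)) = P⁻¹ := by
      simp [ContinuousLinearMap.comp_apply, hEsymm]
    rw [hval] at hd
    apply hd.congr_of_eventuallyEq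
    have htend : Filter.Tendsto (fun y : ℝ => (y, t₀)) (𝓝 y₀) (𝓝 (y₀, t₀)) :=
      (continuous_id.prodMk continuous_const).tendsto y₀
    filter_upwards [htend.eventually heq] with y hy
    exact (hy ht₀).symm
  · -- derivative in t
    have hline : HasDerivAt (fun s : ℝ => (y₀, s)) ((0:ℝ), (1:ℝ)) t₀ :=
      (hasDerivAt_const t₀ y₀).prodMk (hasDerivAt_id t₀)
    have hd := hΨd.comp_hasDerivAt t₀ hline
    have hval : ((ContinuousLinearMap.fst ℝ ℝ ℝ).comp
        (E.symm : (ℝ × ℝ) →L[ℝ] (ℝ × ℝ))) ((0:ℝ), (1:ℝ)) = -(f x₀ * dampI a lam t₀) / P := by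
      simp [ContinuousLinearMap.comp_apply, hEsymm, hQ]
      field_simp
    rw [hval] at hd
    apply (hd.hasDerivWithinAt).congr_of_eventuallyEq
    · have htend : Filter.Tendsto (fun s : ℝ => (y₀, s)) (𝓝[Set.Ici 0] t₀) (𝓝 (y₀, t₀)) :=
        ((continuous_const.prodMk continuous_id).tendsto t₀).mono_left nhdsWithin_le_nhds
      filter_upwards [htend.eventually heq, self_mem_nhdsWithin] with s hs hs'
      exact (hs hs').symm
    · simp [hΦat, hx₀]

end Key

lemma dampI_eq_inv (a lam t : ℝ) : dampI a lam t = (dampA a lam t)⁻¹ := by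
  rw [dampA, dampI, ← Real.exp_neg]
  ring_nf

lemma contH (hlam : 1 < lam) (hf : ContDiff ℝ 1 f) (hf' : ∀ x : ℝ, 0 ≤ deriv f x) :
    ContinuousOn (fun p : ℝ × ℝ => burgH a lam f p.1 p.2) (Set.univ ×ˢ Set.Ici 0) := by
  intro p hp
  have := (key (a := a) hlam hf hf' p.1 p.2 hp.2).1
  simpa using this

lemma contA2 (hlam : 1 < lam) : ContinuousOn (fun p : ℝ × ℝ => dampA a lam p.2) (Set.univ ×ˢ Set.Ici 0) := by
  intro p hp
  have h2 : (-1:ℝ) < p.2 := by have := hp.2; simp only [Set.mem_Ici] at this; linarith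
  exact (((hasStrictDerivAt_dampA a lam hlam h2).hasDerivAt.continuousAt).comp
    continuous_snd.continuousAt).continuousWithinAt

lemma contB2 (hlam : 1 < lam) :
    ContinuousOn (fun p : ℝ × ℝ => dampB a lam p.2) (Set.univ ×ˢ Set.Ici 0) := by
  intro p hp
  have h2 : (-1:ℝ) < p.2 := by have := hp.2; simp only [Set.mem_Ici] at this; linarith
  exact (((hasStrictDerivAt_dampB a lam h2).hasDerivAt.continuousAt).comp
    continuous_snd.continuousAt).continuousWithinAt

lemma contI2 : ContinuousOn (fun p : ℝ × ℝ => dampI a lam p.2) (Set.univ ×ˢ Set.Ici 0) := by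
  intro p hp
  have h2 : (-1:ℝ) < p.2 := by have := hp.2; simp only [Set.mem_Ici] at this; linarith
  exact ((continuousAt_dampI a lam h2).comp continuous_snd.continuousAt).continuousWithinAt

lemma contR2 {lam : ℝ} : ContinuousOn (fun p : ℝ × ℝ => (1 + p.2) ^ lam) (Set.univ ×ˢ Set.Ici 0) := by
  intro p hp
  have h2 : (0:ℝ) < 1 + p.2 := by have := hp.2; simp only [Set.mem_Ici] at this; linarith
  have hinner : ContinuousAt (fun q : ℝ × ℝ => 1 + q.2) p := by fun_prop
  exact (hinner.rpow_const (Or.inl h2.ne')).continuousWithinAt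

section Final
variable {a lam : ℝ} {f : ℝ → ℝ}

noncomputable def burgPhi (a lam : ℝ) (f : ℝ → ℝ) (y t : ℝ) : ℝ :=
  f (burgH a lam f y t) * (dampA a lam t)⁻¹

noncomputable def burgPhiX (a lam : ℝ) (f : ℝ → ℝ) (y t : ℝ) : ℝ :=
  deriv f (burgH a lam f y t) * (1 + deriv f (burgH a lam f y t) * dampB a lam t)⁻¹ *
    (dampA a lam t)⁻¹

noncomputable def burgPhiT (a lam : ℝ) (f : ℝ → ℝ) (y t : ℝ) : ℝ :=
  deriv f (burgH a lam f y t) *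
      (-(f (burgH a lam f y t) * dampI a lam t) /
        (1 + deriv f (burgH a lam f y t) * dampB a lam t)) * (dampA a lam t)⁻¹ +
    f (burgH a lam f y t) *
      (-(dampA a lam t * (a / (1 + t) ^ lam)) / (dampA a lam t ^ 2))

lemma burgH_zero (hf : ContDiff ℝ 1 f) (hf' : ∀ x : ℝ, 0 ≤ deriv f x) (x : ℝ) :
    burgH a lam f x 0 = x := by
  have := burgH_g (a := a) (lam := lam) hf hf' le_rfl x
  rwa [dampB_zero, mul_zero, add_zero] at this

theorem stmt11' (a lam : ℝ) (hlam : 1 < lam)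
    (f : ℝ → ℝ) (hf : ContDiff ℝ 1 f) (hf' : ∀ x : ℝ, 0 ≤ deriv f x) :
    ∃ φ φx φt : ℝ → ℝ → ℝ,
      IsDampedBurgersSol a lam f (Set.Ici 0) φ φx φt ∧
      (∀ t : ℝ, 0 ≤ t →
        StrictMono (fun x => x + f x * dampB a lam t) ∧
        Function.Bijective (fun x => x + f x * dampB a lam t) ∧
        (∀ x : ℝ,
          HasDerivAt (fun y => y + f y * dampB a lam t) (1 + deriv f x * dampB a lam t) x)) ∧
      (∀ x : ℝ, ∀ t : ℝ, 0 ≤ t →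
        φ (x + f x * dampB a lam t) t = f x / dampA a lam t) := by
  refine ⟨burgPhi a lam f, burgPhiX a lam f, burgPhiT a lam f, ?_, ?_, ?_⟩
  · refine ⟨?_, ?_, ?_, ?_, ?_, ?_, ?_⟩
    · -- initial condition
      intro x
      rw [burgPhi, burgH_zero hf hf', dampA_zero, inv_one, mul_one]
    · -- x-derivative
      intro x t ht
      have hkey := (key (a := a) hlam hf hf' x t ht).2.1
      have hfd : HasDerivAt f (deriv f (burgH a lam f x t)) (burgH a lam f x t) :=
        ((hf.differentiable one_ne_zero) _).hasDerivAt
      have := (hfd.comp x hkey).mul_const (dampA a lam t)⁻¹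
      exact this
    · -- t-derivative
      intro x t ht
      have ht' : (-1:ℝ) < t := by simp only [Set.mem_Ici] at ht; linarith
      have hkey := (key (a := a) hlam hf hf' x t ht).2.2
      have hfd : HasDerivAt f (deriv f (burgH a lam f x t)) (burgH a lam f x t) :=
        ((hf.differentiable one_ne_zero) _).hasDerivAt
      have hcomp := hfd.comp_hasDerivWithinAt t hkey
      have hA : HasDerivWithinAt (fun s => dampA a lam s)
          (dampA a lam t * (a / (1 + t) ^ lam)) (Set.Ici 0) t :=
        (hasStrictDerivAt_dampA a lam hlam ht').hasDerivAt.hasDerivWithinAt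
      have hAinv := hA.inv (dampA_pos a lam t).ne'
      have := hcomp.mul hAinv
      convert this using 1
      all_goals rfl
    · -- continuity of φ
      have hH := contH (a := a) hlam hf hf'
      have hA := contA2 (a := a) hlam
      exact (hf.continuous.comp_continuousOn hH).mul
        (hA.inv₀ fun p hp => (dampA_pos a lam p.2).ne')
    · -- continuity of φx
      have hH := contH (a := a) hlam hf hf'
      have hA := contA2 (a := a) hlam
      have hB := contB2 (a := a) hlam
      have hdf := (hf.continuous_deriv le_rfl).comp_continuousOn hH
      have hden : ContinuousOn
          (fun p : ℝ × ℝ => 1 + deriv f (burgH a lam f p.1 p.2) * dampB a lam p.2)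
          (Set.univ ×ˢ Set.Ici 0) := continuousOn_const.add (hdf.mul hB)
      have hdenne : ∀ p ∈ Set.univ ×ˢ Set.Ici (0:ℝ),
          1 + deriv f (burgH a lam f p.1 p.2) * dampB a lam p.2 ≠ 0 := fun p hp =>
        (g_denom_pos hf' (dampB_nonneg a lam hp.2) _).ne'
      exact (hdf.mul (hden.inv₀ hdenne)).mul
        (hA.inv₀ fun p hp => (dampA_pos a lam p.2).ne')
    · -- continuity of φt
      have hH := contH (a := a) hlam hf hf'
      have hA := contA2 (a := a) hlam
      have hB := contB2 (a := a) hlam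
      have hI := contI2 (a := a) (lam := lam)
      have hR := contR2 (lam := lam)
      have hfH := hf.continuous.comp_continuousOn hH
      have hdf := (hf.continuous_deriv le_rfl).comp_continuousOn hH
      have hden : ContinuousOn
          (fun p : ℝ × ℝ => 1 + deriv f (burgH a lam f p.1 p.2) * dampB a lam p.2)
          (Set.univ ×ˢ Set.Ici 0) := continuousOn_const.add (hdf.mul hB)
      have hdenne : ∀ p ∈ Set.univ ×ˢ Set.Ici (0:ℝ),
          1 + deriv f (burgH a lam f p.1 p.2) * dampB a lam p.2 ≠ 0 := fun p hp =>
        (g_denom_pos hf' (dampB_nonneg a lam hp.2) _).ne'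
      have hRne : ∀ p ∈ (Set.univ : Set ℝ) ×ˢ Set.Ici (0:ℝ), (1 + p.2) ^ lam ≠ 0 := fun p hp => by
        have : (0:ℝ) < 1 + p.2 := by have := hp.2; simp only [Set.mem_Ici] at this; linarith
        exact (Real.rpow_pos_of_pos this lam).ne'
      have hAne : ∀ p ∈ (Set.univ : Set ℝ) ×ˢ Set.Ici (0:ℝ), dampA a lam p.2 ≠ 0 := fun p hp =>
        (dampA_pos a lam p.2).ne'
      have hA2ne : ∀ p ∈ (Set.univ : Set ℝ) ×ˢ Set.Ici (0:ℝ), dampA a lam p.2 ^ 2 ≠ 0 := fun p hp =>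
        pow_ne_zero 2 (dampA_pos a lam p.2).ne'
      exact ((hdf.mul (((hfH.mul hI).neg).div hden hdenne)).mul (hA.inv₀ hAne)).add
        (hfH.mul (((hA.mul (continuousOn_const.div hR hRne)).neg).div (hA.pow 2) hA2ne))
    · -- the PDE
      intro x t ht
      have ht' : (-1:ℝ) < t := by simp only [Set.mem_Ici] at ht; linarith
      have hApos := dampA_pos a lam t
      have hPpos := g_denom_pos hf' (dampB_nonneg a lam ht) (burgH a lam f x t)
      have hRpos : (0:ℝ) < (1 + t) ^ lam :=
        Real.rpow_pos_of_pos (by simp only [Set.mem_Ici] at ht; linarith) lam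
      rw [burgPhi, burgPhiX, burgPhiT, dampI_eq_inv]
      field_simp
      ring
  · intro t ht
    exact ⟨g_strictMono hf hf' (dampB_nonneg a lam ht),
      ⟨(g_strictMono hf hf' (dampB_nonneg a lam ht)).injective,
        g_surjective hf hf' (dampB_nonneg a lam ht)⟩,
      fun x => hasDerivAt_g hf x⟩
  · intro x t ht
    rw [burgPhi, burgH_g hf hf' ht x, div_eq_mul_inv]

end Final

/-- If the initial slope is everywhere nonnegative, the damped Burgers equation (weak
damping case `λ > 1`) admits a global classical solution, determined by the implicit
relation `φ(x + f(x)·B(t), t) = f(x)/A(t)`, each map `x ↦ x + f(x)·B(t)` being a strictly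
increasing C¹ bijection of `ℝ`. -/
theorem stmt11 (a lam : ℝ) (hlam : 1 < lam)
    (f : ℝ → ℝ) (hf : ContDiff ℝ 1 f) (hf' : ∀ x : ℝ, 0 ≤ deriv f x) :
    ∃ φ φx φt : ℝ → ℝ → ℝ,
      IsDampedBurgersSol a lam f (Set.Ici 0) φ φx φt ∧
      (∀ t : ℝ, 0 ≤ t →
        StrictMono (fun x => x + f x * dampB a lam t) ∧
        Function.Bijective (fun x => x + f x * dampB a lam t) ∧
        (∀ x : ℝ,
          HasDerivAt (fun y => y + f y * dampB a lam t) (1 + deriv f x * dampB a lam t) x)) ∧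
      (∀ x : ℝ, ∀ t : ℝ, 0 ≤ t →
        φ (x + f x * dampB a lam t) t = f x / dampA a lam t) :=
  stmt11' a lam hlam f hf hf'
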